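/- Let m > −1, 0 ≤ a₀ ≤ a₁, b, K, L > 0, c ≥ b, and k, l natural numbers. Then there exists a polynomial P with nonnegative coefficients (depending on m, k, l) such that ∫_{a₀}^{a₁} max(x,b)^m · (ln₊(K/x))^k · (ln₊(x/L))^l dx ≤ max(c,a₁)^{m+1} · P(ln₊(K/max(c,a₁)), ln₊(a₁/L)). -/
import Mathlib

open MeasureTheory Set Finset

/-- The positive part of the logarithm: `ln₊ x = max (ln x) 0`. -/
noncomputable def lnp (x : ℝ) : ℝ := max (Real.log x) 0

lemma lnp_nonneg (x : ℝ) : 0 ≤ lnp x := le_max_right _ _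

lemma lnp_mono {u v : ℝ} (hu : 0 < u) (huv : u ≤ v) : lnp u ≤ lnp v :=
  max_le_max (Real.log_le_log hu huv) le_rfl

lemma lnp_mul_le {u v : ℝ} (hu : 0 < u) (hv : 0 < v) : lnp (u * v) ≤ lnp u + lnp v := by
  unfold lnp
  rw [Real.log_mul hu.ne' hv.ne']
  exact max_le (add_le_add (le_max_left _ _) (le_max_left _ _))
    (add_nonneg (le_max_right _ _) (le_max_right _ _))

lemma lnp_le_rpow_div {t ε : ℝ} (ht : 0 ≤ t) (hε : 0 < ε) : lnp t ≤ ε⁻¹ * t ^ ε := by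
  exact max_le ((Real.log_le_rpow_div ht hε).trans_eq (div_eq_inv_mul _ _)) (by positivity)

lemma integral_rpow_le_aux {p a₀ a₁ M : ℝ} (hp : -1 < p) (h0 : 0 ≤ a₀) (h01 : a₀ ≤ a₁)
    (h1M : a₁ ≤ M) : (∫ x in a₀..a₁, x ^ p) ≤ M ^ (p + 1) / (p + 1) := by
  rw [integral_rpow (Or.inl hp)]
  have hq : 0 < p + 1 := by linarith
  have h1 : 0 ≤ a₀ ^ (p + 1) := Real.rpow_nonneg h0 _
  have h2 : a₁ ^ (p + 1) ≤ M ^ (p + 1) := Real.rpow_le_rpow (h0.trans h01) h1M hq.le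
  gcongr
  linarith

/-- Lemma (Λ integration, part 2): for `m > −1`, `k, l : ℕ`, there is a polynomial `P` in two
variables with nonnegative coefficients (depending on `m, k, l`) such that for all
`0 ≤ a₀ ≤ a₁`, `b, K, L > 0` and `c ≥ b`,
`∫_{a₀}^{a₁} max(x,b)^m (ln₊(K/x))^k (ln₊(x/L))^l dx
  ≤ max(c,a₁)^{m+1} · P(ln₊(K/max(c,a₁)), ln₊(a₁/L))`. -/
theorem lambda_integration_two (m : ℝ) (hm : -1 < m) (k l : ℕ) :
    ∃ P : MvPolynomial (Fin 2) ℝ, (∀ d, 0 ≤ P.coeff d) ∧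
      ∀ a₀ a₁ b c K L : ℝ, 0 ≤ a₀ → a₀ ≤ a₁ → 0 < b → 0 < K → 0 < L → b ≤ c →
        (∫ x in a₀..a₁, (max x b) ^ m * (lnp (K / x)) ^ k * (lnp (x / L)) ^ l)
          ≤ (max c a₁) ^ (m + 1) *
            MvPolynomial.eval ![lnp (K / max c a₁), lnp (a₁ / L)] P := by
  have hm1 : (0:ℝ) < m + 1 := by linarith
  have hmin : (0:ℝ) < min (m + 1) 1 := lt_min hm1 one_pos
  set ε : ℝ := min (m + 1) 1 / (2 * (k + 1)) with hεdef
  have hε : 0 < ε := by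
    rw [hεdef]; positivity
  set E : ℝ := 2 / (m + 1) + 2 with hEdef
  have hE : 0 ≤ E := by
    rw [hEdef]
    have : 0 ≤ 2 / (m + 1) := div_nonneg (by norm_num) hm1.le
    linarith
  have hsb : ∀ n : ℕ, n ≤ k → (n:ℝ) * ε ≤ 1 / 2 ∧ (n:ℝ) * ε ≤ (m + 1) / 2 := by
    intro n hn
    have h1 : (n:ℝ) * ε ≤ (k:ℝ) * ε :=
      mul_le_mul_of_nonneg_right (Nat.cast_le.mpr hn) hε.le
    have h2 : (k:ℝ) * ε ≤ min (m + 1) 1 / 2 := by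
      rw [hεdef, ← mul_div_assoc, div_le_div_iff₀ (by positivity) (by norm_num : (0:ℝ) < 2)]
      nlinarith [hmin.le, Nat.cast_nonneg (α := ℝ) k]
    have h3 := min_le_right (m + 1) 1
    have h4 := min_le_left (m + 1) 1
    constructor <;> linarith
  refine ⟨∑ j ∈ Finset.range (k + 1),
      MvPolynomial.monomial (Finsupp.single (0 : Fin 2) j + Finsupp.single 1 l)
        ((k.choose j : ℝ) * ε⁻¹ ^ (k - j) * E), ?_, ?_⟩
  · intro d
    rw [MvPolynomial.coeff_sum]
    refine Finset.sum_nonneg fun j _ => ?_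
    rw [MvPolynomial.coeff_monomial]
    split_ifs
    · positivity
    · exact le_refl 0
  · intro a₀ a₁ b c K L h0 h01 hb hK hL hbc
    set M : ℝ := max c a₁ with hMdef
    have hM0 : 0 < M := lt_of_lt_of_le hb (hbc.trans (le_max_left c a₁))
    have ha₁M : a₁ ≤ M := le_max_right c a₁
    set A : ℝ := lnp (K / M) with hAdef
    set B : ℝ := lnp (a₁ / L) with hBdef
    have hA0 : 0 ≤ A := lnp_nonneg _
    have hB0 : 0 ≤ B := lnp_nonneg _
    set G : ℕ → ℝ → ℝ := fun j x =>
      ((k.choose j : ℝ) * A ^ j * ε⁻¹ ^ (k - j) * B ^ l) *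
        (M ^ (((k - j : ℕ) : ℝ) * ε) * x ^ (m - ((k - j : ℕ) : ℝ) * ε) +
          M ^ (m + ((k - j : ℕ) : ℝ) * ε) * x ^ (-(((k - j : ℕ) : ℝ) * ε))) with hGdef
    -- exponent facts
    have hexp : ∀ j : ℕ, -1 < m - ((k - j : ℕ) : ℝ) * ε ∧ -1 < -(((k - j : ℕ) : ℝ) * ε) := by
      intro j
      obtain ⟨hs1, hs2⟩ := hsb (k - j) (Nat.sub_le k j)
      constructor <;> linarith
    -- integrability of G j
    have hGI : ∀ j ∈ Finset.range (k + 1), IntervalIntegrable (G j) volume a₀ a₁ := by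
      intro j _
      obtain ⟨hp1, hp2⟩ := hexp j
      exact (((intervalIntegral.intervalIntegrable_rpow' hp1).const_mul _).add
        ((intervalIntegral.intervalIntegrable_rpow' hp2).const_mul _)).const_mul _
    -- pointwise bound
    have hle : ∀ x ∈ Set.Ioc a₀ a₁,
        (max x b) ^ m * (lnp (K / x)) ^ k * (lnp (x / L)) ^ l
          ≤ ∑ j ∈ Finset.range (k + 1), G j x := by
      intro x hx
      have hx0 : 0 < x := h0.trans_lt hx.1
      have hxM : x ≤ M := hx.2.trans ha₁M
      have hxm : 0 ≤ x ^ m + M ^ m :=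
        add_nonneg (Real.rpow_nonneg hx0.le _) (Real.rpow_nonneg hM0.le _)
      have h1 : (max x b) ^ m ≤ x ^ m + M ^ m := by
        rcases le_or_gt 0 m with hm0 | hm0
        · have hMb : max x b ≤ M := max_le hxM (hbc.trans (le_max_left c a₁))
          have := Real.rpow_le_rpow (le_trans hx0.le (le_max_left x b)) hMb hm0
          have hx' : 0 ≤ x ^ m := Real.rpow_nonneg hx0.le _
          linarith
        · have := Real.rpow_le_rpow_of_nonpos hx0 (le_max_left x b) hm0.le
          have hM' : 0 ≤ M ^ m := Real.rpow_nonneg hM0.le _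
          linarith
      have h2' : lnp (K / x) ≤ A + lnp (M / x) := by
        have hKx : K / x = (K / M) * (M / x) := by
          field_simp
        rw [hKx, hAdef]
        exact lnp_mul_le (div_pos hK hM0) (div_pos hM0 hx0)
      have h2 : (lnp (K / x)) ^ k ≤ (A + lnp (M / x)) ^ k :=
        pow_le_pow_left₀ (lnp_nonneg _) h2' k
      have h3 : (lnp (x / L)) ^ l ≤ B ^ l :=
        pow_le_pow_left₀ (lnp_nonneg _) (lnp_mono (div_pos hx0 hL)
          (div_le_div_of_nonneg_right hx.2 hL.le)) l
      calc (max x b) ^ m * (lnp (K / x)) ^ k * (lnp (x / L)) ^ l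
          ≤ (x ^ m + M ^ m) * (A + lnp (M / x)) ^ k * B ^ l := by
            refine mul_le_mul (mul_le_mul h1 h2 (pow_nonneg (lnp_nonneg _) k) hxm)
              h3 (pow_nonneg (lnp_nonneg _) l) ?_
            exact mul_nonneg hxm (pow_nonneg (add_nonneg hA0 (lnp_nonneg _)) k)
        _ = ∑ j ∈ Finset.range (k + 1),
              (x ^ m + M ^ m) * (A ^ j * lnp (M / x) ^ (k - j) * (k.choose j : ℝ)) * B ^ l := by
            rw [add_pow, Finset.mul_sum, Finset.sum_mul]
        _ ≤ ∑ j ∈ Finset.range (k + 1), G j x := by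
            refine Finset.sum_le_sum fun j _ => ?_
            have hMx : (0:ℝ) ≤ M / x := (div_pos hM0 hx0).le
            have hstep : lnp (M / x) ≤ ε⁻¹ * (M / x) ^ ε := lnp_le_rpow_div hMx hε
            have hpowkj : ((M / x) ^ ε) ^ (k - j) = (M / x) ^ (((k - j : ℕ) : ℝ) * ε) := by
              rw [← Real.rpow_natCast ((M / x) ^ ε) (k - j), ← Real.rpow_mul hMx,
                mul_comm ε]
            have hlnp2 : lnp (M / x) ^ (k - j)
                ≤ ε⁻¹ ^ (k - j) * (M ^ (((k - j : ℕ) : ℝ) * ε) * x ^ (-(((k - j : ℕ) : ℝ) * ε))) := by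
              calc lnp (M / x) ^ (k - j) ≤ (ε⁻¹ * (M / x) ^ ε) ^ (k - j) :=
                    pow_le_pow_left₀ (lnp_nonneg _) hstep _
                _ = ε⁻¹ ^ (k - j) * ((M / x) ^ ε) ^ (k - j) := mul_pow _ _ _
                _ = ε⁻¹ ^ (k - j) * (M / x) ^ (((k - j : ℕ) : ℝ) * ε) := by rw [hpowkj]
                _ = ε⁻¹ ^ (k - j) *
                      (M ^ (((k - j : ℕ) : ℝ) * ε) * x ^ (-(((k - j : ℕ) : ℝ) * ε))) := by
                    rw [Real.div_rpow hM0.le hx0.le, Real.rpow_neg hx0.le, div_eq_mul_inv]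
            calc (x ^ m + M ^ m) * (A ^ j * lnp (M / x) ^ (k - j) * (k.choose j : ℝ)) * B ^ l
                ≤ (x ^ m + M ^ m) * (A ^ j * (ε⁻¹ ^ (k - j) *
                    (M ^ (((k - j : ℕ) : ℝ) * ε) * x ^ (-(((k - j : ℕ) : ℝ) * ε)))) *
                    (k.choose j : ℝ)) * B ^ l := by
                  refine mul_le_mul_of_nonneg_right ?_ (pow_nonneg hB0 l)
                  refine mul_le_mul_of_nonneg_left ?_ hxm
                  refine mul_le_mul_of_nonneg_right ?_ (Nat.cast_nonneg _)
                  exact mul_le_mul_of_nonneg_left hlnp2 (pow_nonneg hA0 j)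
              _ = G j x := by
                  rw [hGdef]
                  simp only
                  rw [sub_eq_add_neg m, Real.rpow_add hx0, Real.rpow_add hM0]
                  ring
    -- measurability and nonnegativity of the integrand
    have hFm : Measurable (fun x : ℝ => (max x b) ^ m * (lnp (K / x)) ^ k * (lnp (x / L)) ^ l) := by
      have hlnpm : Measurable lnp := Real.measurable_log.max measurable_const
      exact (((measurable_id.max measurable_const).pow_const m).mul
        ((hlnpm.comp (measurable_const.div measurable_id)).pow_const k)).mul
        ((hlnpm.comp (measurable_id.div measurable_const)).pow_const l)
    have hf0 : ∀ x ∈ Set.Ioc a₀ a₁,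
        0 ≤ (max x b) ^ m * (lnp (K / x)) ^ k * (lnp (x / L)) ^ l := by
      intro x _
      exact mul_nonneg (mul_nonneg (Real.rpow_nonneg (le_max_of_le_right hb.le) m)
        (pow_nonneg (lnp_nonneg _) k)) (pow_nonneg (lnp_nonneg _) l)
    have hgOn : IntegrableOn (fun x => ∑ j ∈ Finset.range (k + 1), G j x) (Set.Ioc a₀ a₁)
        volume := by
      refine MeasureTheory.integrable_finset_sum _ fun j hj => ?_
      exact (intervalIntegrable_iff_integrableOn_Ioc_of_le h01).mp (hGI j hj)
    have hfOn : IntegrableOn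
        (fun x : ℝ => (max x b) ^ m * (lnp (K / x)) ^ k * (lnp (x / L)) ^ l)
        (Set.Ioc a₀ a₁) volume := by
      refine MeasureTheory.Integrable.mono' hgOn hFm.aestronglyMeasurable.restrict ?_
      refine (MeasureTheory.ae_restrict_iff' measurableSet_Ioc).mpr
        (Filter.Eventually.of_forall fun x hx => ?_)
      rw [Real.norm_eq_abs, abs_of_nonneg (hf0 x hx)]
      exact hle x hx
    -- the per-j integral bound
    have hIj : ∀ j ∈ Finset.range (k + 1), (∫ x in a₀..a₁, G j x)
        ≤ ((k.choose j : ℝ) * A ^ j * ε⁻¹ ^ (k - j) * B ^ l) * (E * M ^ (m + 1)) := by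
      intro j _
      obtain ⟨hp1, hp2⟩ := hexp j
      obtain ⟨hs1, hs2⟩ := hsb (k - j) (Nat.sub_le k j)
      set s : ℝ := ((k - j : ℕ) : ℝ) * ε with hsdef
      have hi1 : IntervalIntegrable (fun x : ℝ => x ^ (m - s)) volume a₀ a₁ :=
        intervalIntegral.intervalIntegrable_rpow' hp1
      have hi2 : IntervalIntegrable (fun x : ℝ => x ^ (-s)) volume a₀ a₁ :=
        intervalIntegral.intervalIntegrable_rpow' hp2
      rw [hGdef]
      simp only
      rw [intervalIntegral.integral_const_mul]
      refine mul_le_mul_of_nonneg_left ?_ (by positivity)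
      rw [intervalIntegral.integral_add (hi1.const_mul _) (hi2.const_mul _),
        intervalIntegral.integral_const_mul, intervalIntegral.integral_const_mul]
      have b1 : (∫ x in a₀..a₁, x ^ (m - s)) ≤ M ^ (m - s + 1) / (m - s + 1) :=
        integral_rpow_le_aux hp1 h0 h01 ha₁M
      have b2 : (∫ x in a₀..a₁, x ^ (-s)) ≤ M ^ (-s + 1) / (-s + 1) :=
        integral_rpow_le_aux hp2 h0 h01 ha₁M
      have step1 : M ^ s * (∫ x in a₀..a₁, x ^ (m - s)) + M ^ (m + s) * (∫ x in a₀..a₁, x ^ (-s))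
          ≤ M ^ s * (M ^ (m - s + 1) / (m - s + 1)) + M ^ (m + s) * (M ^ (-s + 1) / (-s + 1)) := by
        have hMs : (0:ℝ) ≤ M ^ s := Real.rpow_nonneg hM0.le _
        have hMms : (0:ℝ) ≤ M ^ (m + s) := Real.rpow_nonneg hM0.le _
        exact add_le_add (mul_le_mul_of_nonneg_left b1 hMs) (mul_le_mul_of_nonneg_left b2 hMms)
      refine step1.trans ?_
      have e1 : M ^ s * M ^ (m - s + 1) = M ^ (m + 1) := by
        rw [← Real.rpow_add hM0]; ring_nf
      have e2 : M ^ (m + s) * M ^ (-s + 1) = M ^ (m + 1) := by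
        rw [← Real.rpow_add hM0]; ring_nf
      rw [← mul_div_assoc, ← mul_div_assoc, e1, e2]
      have hM1 : (0:ℝ) ≤ M ^ (m + 1) := Real.rpow_nonneg hM0.le _
      have c1 : M ^ (m + 1) / (m - s + 1) ≤ M ^ (m + 1) / ((m + 1) / 2) := by
        apply div_le_div_of_nonneg_left hM1 (by linarith) (by linarith)
      have c2 : M ^ (m + 1) / (-s + 1) ≤ M ^ (m + 1) / (1 / 2) := by
        apply div_le_div_of_nonneg_left hM1 (by norm_num) (by linarith)
      have d1 : M ^ (m + 1) / ((m + 1) / 2) = M ^ (m + 1) * (2 / (m + 1)) := by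
        field_simp
      have d2 : M ^ (m + 1) / (1 / 2) = M ^ (m + 1) * 2 := by
        field_simp
      rw [hEdef]
      calc M ^ (m + 1) / (m - s + 1) + M ^ (m + 1) / (-s + 1)
          ≤ M ^ (m + 1) * (2 / (m + 1)) + M ^ (m + 1) * 2 := by
            rw [← d1, ← d2]; exact add_le_add c1 c2
        _ = (2 / (m + 1) + 2) * M ^ (m + 1) := by ring
    -- put it together
    calc (∫ x in a₀..a₁, (max x b) ^ m * (lnp (K / x)) ^ k * (lnp (x / L)) ^ l)
        = ∫ x in Set.Ioc a₀ a₁, (max x b) ^ m * (lnp (K / x)) ^ k * (lnp (x / L)) ^ l :=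
          intervalIntegral.integral_of_le h01
      _ ≤ ∫ x in Set.Ioc a₀ a₁, ∑ j ∈ Finset.range (k + 1), G j x :=
          MeasureTheory.setIntegral_mono_on hfOn hgOn measurableSet_Ioc hle
      _ = ∫ x in a₀..a₁, ∑ j ∈ Finset.range (k + 1), G j x :=
          (intervalIntegral.integral_of_le h01).symm
      _ = ∑ j ∈ Finset.range (k + 1), ∫ x in a₀..a₁, G j x :=
          intervalIntegral.integral_finset_sum hGI
      _ ≤ ∑ j ∈ Finset.range (k + 1),
            ((k.choose j : ℝ) * A ^ j * ε⁻¹ ^ (k - j) * B ^ l) * (E * M ^ (m + 1)) :=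
          Finset.sum_le_sum hIj
      _ = M ^ (m + 1) * MvPolynomial.eval ![A, B]
            (∑ j ∈ Finset.range (k + 1),
              MvPolynomial.monomial (Finsupp.single (0 : Fin 2) j + Finsupp.single 1 l)
                ((k.choose j : ℝ) * ε⁻¹ ^ (k - j) * E)) := by
          rw [map_sum, Finset.mul_sum]
          refine Finset.sum_congr rfl fun j _ => ?_
          rw [MvPolynomial.eval_monomial,
            Finsupp.prod_add_index' (fun a => pow_zero _) (fun a b₁ b₂ => pow_add _ _ _)]
          simp only [Finsupp.prod_single_index, pow_zero, Matrix.cons_val_zero,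
            Matrix.cons_val_one, Matrix.head_cons]
          ring
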